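/- Let K ⊆ ℝ^n be a convex body and let γ be a closed polygon in 𝒫⁺(K) such that len(γ) ≤ len(γ') for every closed polygon γ' ∈ 𝒫⁺(K). Then there exists x ∈ ℝ^n with (image of γ) + x ⊆ K. -/

import Mathlib

open scoped RealInnerProductSpace Pointwise
open Metric

noncomputable section

/-- Euclidean space ℝ^n. -/
abbrev Euc (n : ℕ) := EuclideanSpace ℝ (Fin n)

/-- The image of a closed polygon with vertices `q 0, …, q (m-1)` (indices mod `m`):
the union of the segments `[q i, q (i+1)]`. -/
def polyImage {n m : ℕ} [NeZero m] (q : Fin m → Euc n) : Set (Euc n) :=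
  ⋃ i : Fin m, segment ℝ (q i) (q (i + 1))

/-- The length of a closed polygon: `∑ i, ‖q (i+1) - q i‖`. -/
noncomputable def polyLength {n m : ℕ} [NeZero m] (q : Fin m → Euc n) : ℝ :=
  ∑ i : Fin m, ‖q (i + 1) - q i‖

/-- A convex body: a compact convex set with nonempty interior. -/
def IsConvexBody {n : ℕ} (K : Set (Euc n)) : Prop :=
  IsCompact K ∧ Convex ℝ K ∧ (interior K).Nonempty

/-- A closed polygon belongs to `𝒫⁺(K)` if no translate of its image is contained
in the interior of `K`. -/
def InPPlus {n m : ℕ} [NeZero m] (K : Set (Euc n)) (q : Fin m → Euc n) : Prop :=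
  ∀ x : Euc n, ¬ ((fun p => p + x) '' polyImage q ⊆ interior K)

/-- Unit direction of the `i`-th edge of a closed polygon. -/
noncomputable def dir {n m : ℕ} [NeZero m] (q : Fin m → Euc n) (i : Fin m) : Euc n :=
  ‖q (i + 1) - q i‖⁻¹ • (q (i + 1) - q i)

/-- Outer normal `ν i = u (i-1) - u i` at the `i`-th vertex. -/
noncomputable def normalVec {n m : ℕ} [NeZero m] (q : Fin m → Euc n) (i : Fin m) : Euc n :=
  dir q (i - 1) - dir q i

/-- A periodic billiard trajectory on a convex body `K`. -/
def IsBilliard {n m : ℕ} [NeZero m] (K : Set (Euc n)) (q : Fin m → Euc n) : Prop :=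
  2 ≤ m ∧ (∀ i, q (i + 1) ≠ q i) ∧ (∀ i, q i ∈ K) ∧
    ∀ i, normalVec q i ≠ 0 ∧ ∀ x ∈ K, ⟪x - q i, normalVec q i⟫ ≤ 0

theorem stmt14 {n m : ℕ} [NeZero m] (K : Set (Euc n)) (hK : IsConvexBody K)
    (q : Fin m → Euc n) (hP : InPPlus K q)
    (hmin : ∀ (m' : ℕ) [NeZero m'] (q' : Fin m' → Euc n),
      InPPlus K q' → polyLength q ≤ polyLength q') :
    ∃ x : Euc n, (fun p => p + x) '' polyImage q ⊆ K := by
  classical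
  obtain ⟨hKc, hKconv, y0, hy0⟩ := hK
  -- nonzero length
  have hlen0 : 0 < polyLength q := by
    rcases lt_or_eq_of_le (Finset.sum_nonneg (fun i _ => norm_nonneg (q (i + 1) - q i)) :
        (0:ℝ) ≤ polyLength q) with h | h
    · exact h
    exfalso
    have hall : ∀ i : Fin m, q (i + 1) = q i := by
      intro i
      have := (Finset.sum_eq_zero_iff_of_nonneg
        (fun i _ => norm_nonneg (q (i + 1) - q i))).mp h.symm i (Finset.mem_univ i)
      have := norm_eq_zero.mp this
      exact sub_eq_zero.mp this
    open Fin.NatCast in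
    have hconst : ∀ i : Fin m, q i = q 0 := by
      have hnat : ∀ k : ℕ, q (k : Fin m) = q 0 := by
        intro k
        induction k with
        | zero => simp
        | succ k ih =>
          have : ((k + 1 : ℕ) : Fin m) = (k : Fin m) + 1 := by push_cast; ring
          rw [this, hall, ih]
      intro i
      have : (((i : ℕ)) : Fin m) = i := Fin.cast_val_eq_self i
      rw [← this, hnat]
    have himg : polyImage q ⊆ {q 0} := by
      intro p hp
      rcases Set.mem_iUnion.mp hp with ⟨i, hi⟩
      rw [hconst i, hconst (i + 1), segment_same] at hi
      exact hi
    refine hP (y0 - q 0) ?_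
    intro p hp
    rcases hp with ⟨s, hs, rfl⟩
    have := himg hs
    simp only [Set.mem_singleton_iff] at this
    rw [this]
    simpa using hy0
  -- scaled polygons fit in the interior
  have key : ∀ t : ℝ, 0 < t → t < 1 →
      ∃ x : Euc n, (fun p => p + x) '' polyImage (fun i => t • q i) ⊆ interior K := by
    intro t ht0 ht1
    by_contra h
    push_neg at h
    have hpp : InPPlus K (fun i => t • q i) := fun x => h x
    have hle := hmin m (fun i => t • q i) hpp
    have hscale : polyLength (fun i => t • q i) = t * polyLength q := by
      unfold polyLength
      rw [Finset.mul_sum]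
      refine Finset.sum_congr rfl fun i _ => ?_
      rw [← smul_sub, norm_smul, Real.norm_eq_abs, abs_of_pos ht0]
    rw [hscale] at hle
    nlinarith
  -- the sequence of parameters and translations
  set t : ℕ → ℝ := fun k => 1 - 1 / ((k : ℝ) + 2) with ht_def
  have ht0 : ∀ k, 0 < t k := by
    intro k
    have h2 : (0:ℝ) < (k : ℝ) + 2 := by positivity
    have : 1 / ((k : ℝ) + 2) ≤ 1 / 2 := by
      apply div_le_div_of_nonneg_left (by norm_num) (by norm_num)
      have : (0:ℝ) ≤ (k : ℝ) := Nat.cast_nonneg k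
      linarith
    simp only [ht_def]
    linarith
  have ht1 : ∀ k, t k < 1 := by
    intro k
    have h2 : (0:ℝ) < (k : ℝ) + 2 := by positivity
    have : 0 < 1 / ((k : ℝ) + 2) := by positivity
    simp only [ht_def]; linarith
  have htlim : Filter.Tendsto t Filter.atTop (nhds 1) := by
    have h1 : Filter.Tendsto (fun k : ℕ => ((k : ℝ) + 2)) Filter.atTop Filter.atTop :=
      Filter.tendsto_atTop_add_const_right _ 2 tendsto_natCast_atTop_atTop
    have h2 : Filter.Tendsto (fun k : ℕ => 1 / ((k : ℝ) + 2)) Filter.atTop (nhds 0) := by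
      simpa [one_div, Function.comp_def] using tendsto_inv_atTop_zero.comp h1
    have h3 := h2.const_sub 1
    simpa [ht_def, one_div] using h3
  choose x hx using fun k => key (t k) (ht0 k) (ht1 k)
  -- scaled image membership
  have hmem : ∀ k, ∀ p ∈ polyImage q, t k • p + x k ∈ interior K := by
    intro k p hp
    apply hx k
    refine ⟨t k • p, ?_, rfl⟩
    rcases Set.mem_iUnion.mp hp with ⟨i, hi⟩
    rcases hi with ⟨a, b, ha, hb, hab, rfl⟩
    refine Set.mem_iUnion.mpr ⟨i, a, b, ha, hb, hab, ?_⟩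
    module
  have hq0 : (q 0 : Euc n) ∈ polyImage q :=
    Set.mem_iUnion.mpr ⟨0, left_mem_segment ℝ _ _⟩
  -- boundedness of x
  obtain ⟨R, hR⟩ := hKc.isBounded.exists_norm_le
  have hxball : ∀ k, x k ∈ closedBall (0 : Euc n) (R + ‖q 0‖) := by
    intro k
    have h1 : t k • q 0 + x k ∈ K := interior_subset (hmem k (q 0) hq0)
    have h2 : ‖t k • q 0 + x k‖ ≤ R := hR _ h1
    have h3 : ‖t k • q 0‖ ≤ ‖q 0‖ := by
      rw [norm_smul, Real.norm_eq_abs, abs_of_pos (ht0 k)]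
      nlinarith [norm_nonneg (q 0), ht1 k, ht0 k]
    have : ‖x k‖ = ‖(t k • q 0 + x k) - t k • q 0‖ := by congr 1; abel
    rw [mem_closedBall, dist_zero_right, this]
    calc ‖(t k • q 0 + x k) - t k • q 0‖ ≤ ‖t k • q 0 + x k‖ + ‖t k • q 0‖ :=
          norm_sub_le _ _
      _ ≤ R + ‖q 0‖ := add_le_add h2 h3
  obtain ⟨xlim, _, φ, hφ, hconv⟩ :=
    tendsto_subseq_of_bounded isBounded_closedBall hxball
  refine ⟨xlim, ?_⟩
  rintro _ ⟨p, hp, rfl⟩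
  have hseq : Filter.Tendsto (fun k => t (φ k) • p + x (φ k)) Filter.atTop
      (nhds (p + xlim)) := by
    have h1 : Filter.Tendsto (fun k => t (φ k)) Filter.atTop (nhds 1) :=
      htlim.comp hφ.tendsto_atTop
    have h2 : Filter.Tendsto (fun k => t (φ k) • p) Filter.atTop (nhds p) := by
      have := h1.smul_const p
      simpa using this
    exact h2.add hconv
  exact hKc.isClosed.mem_of_tendsto hseq
    (Filter.Eventually.of_forall fun k => interior_subset (hmem (φ k) p hp))
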